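/- arXiv:1502.07014 — 2 statements merged into one kernel-verified Lean document; each statement's English description precedes it below -/
import Mathlib

section
/- Suppose ℓ, μ, p are non-empty binary words satisfying h(S) = ℓμ = μ^R ℓ^R and h(L) = ℓℓ^R = ℓμ(complement of μ^R)p. Then h(L) = p^R (complement of μ) ℓ μ; in particular h(S) = ℓμ is both a prefix and a suffix of h(L). -/
def comp (w : List Bool) : List Bool := w.map (fun b => !b)

theorem stmt_9 (ℓ μ p hS hL : List Bool)
    (hℓ : ℓ ≠ []) (hμ : μ ≠ []) (hp : p ≠ [])
    (h1 : hS = ℓ ++ μ) (h2 : hS = μ.reverse ++ ℓ.reverse)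
    (h3 : hL = ℓ ++ ℓ.reverse)
    (h4 : hL = ℓ ++ μ ++ comp μ.reverse ++ p) :
    hL = p.reverse ++ comp μ ++ ℓ ++ μ ∧ hS <+: hL ∧ hS <:+ hL := by
  have hrev : ℓ.reverse = μ ++ (comp μ.reverse ++ p) := by
    have h : ℓ ++ ℓ.reverse = ℓ ++ (μ ++ (comp μ.reverse ++ p)) := by
      simpa [List.append_assoc] using h3.symm.trans h4
    exact List.append_cancel_left h
  have hc : (comp μ.reverse).reverse = comp μ := by
    simp [comp, List.map_reverse]
  have hℓeq : ℓ = p.reverse ++ comp μ ++ μ.reverse := by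
    have h := congrArg List.reverse hrev
    rw [List.reverse_reverse] at h
    rw [h]
    simp [hc, List.append_assoc]
  have hmain : hL = p.reverse ++ comp μ ++ ℓ ++ μ := by
    have hμℓ : μ.reverse ++ ℓ.reverse = ℓ ++ μ := h2.symm.trans h1
    calc hL = ℓ ++ ℓ.reverse := h3
      _ = (p.reverse ++ comp μ ++ μ.reverse) ++ ℓ.reverse := by rw [← hℓeq]
      _ = p.reverse ++ comp μ ++ (μ.reverse ++ ℓ.reverse) := by
          simp [List.append_assoc]
      _ = p.reverse ++ comp μ ++ (ℓ ++ μ) := by rw [hμℓ]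
      _ = p.reverse ++ comp μ ++ ℓ ++ μ := by simp [List.append_assoc]
  refine ⟨hmain, ?_, ?_⟩
  · exact ⟨comp μ.reverse ++ p, by rw [h4, h1]; simp [List.append_assoc]⟩
  · exact ⟨p.reverse ++ comp μ, by rw [hmain, h1]; simp [List.append_assoc]⟩
end

section
/- Let ψ be the morphism with ψ(S) = LSL, ψ(L) = LSLSL, and define languages by 𝓛₀ = L S* and 𝓛_{i+1} = ψ(𝓛_i) L S*. Then no word in any 𝓛_i contains L³ = LLL as a factor, contains SSL as a factor, or contains SLSLS as a factor. -/
/-- Letters: `false` = S, `true` = L. -/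
def psi : Bool → List Bool
  | false => [true, false, true]
  | true => [true, false, true, false, true]

lemma infix_append_split {α : Type*} {p u v : List α} (h : p <:+: u ++ v) :
    p <:+: u ∨ p <:+: v ∨ ∃ p₁ p₂, p = p₁ ++ p₂ ∧ p₁ <:+ u ∧ p₂ <+: v := by
  induction u generalizing p with
  | nil => exact Or.inr (Or.inl (by simpa using h))
  | cons a u ih =>
    obtain ⟨s, r, hsr⟩ := h
    cases s with
    | nil =>
      cases p with
      | nil => exact Or.inl List.nil_infix
      | cons b p' =>
        rw [List.nil_append, List.cons_append, List.cons_append] at hsr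
        injection hsr with hb hpr
        subst hb
        rcases List.append_eq_append_iff.mp hpr with ⟨w, hw1, hw2⟩ | ⟨w, hw1, hw2⟩
        · exact Or.inl (show b :: p' <+: b :: u from
            ⟨w, by rw [hw1, List.cons_append]⟩).isInfix
        · exact Or.inr (Or.inr ⟨b :: u, w, by rw [hw1, List.cons_append],
            List.suffix_refl _, ⟨r, hw2.symm⟩⟩)
    | cons c s' =>
      rw [List.cons_append, List.cons_append] at hsr
      injection hsr with _ hpr
      rcases ih ⟨s', r, hpr⟩ with h1 | h1 | ⟨p₁, p₂, h1, h2, h3⟩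
      · exact Or.inl (List.infix_cons h1)
      · exact Or.inr (Or.inl h1)
      · exact Or.inr (Or.inr ⟨p₁, p₂, h1, h2.trans (List.suffix_cons a u), h3⟩)

lemma pref_fact (v : List Bool) (k : ℕ) :
    [true, false] <+: (v.flatMap psi ++ true :: List.replicate k false) ∨
      (v.flatMap psi ++ true :: List.replicate k false) = [true] := by
  cases v with
  | nil =>
    cases k with
    | zero => right; rfl
    | succ k => left; simp [List.replicate_succ, List.cons_prefix_cons]
  | cons b v =>
    left
    cases b <;> simp [psi, List.cons_prefix_cons]

lemma not_pref_f {u : List Bool}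
    (hpre : [true, false] <+: u ∨ u = [true]) (q : List Bool) :
    ¬ ((false :: q) <+: u) := by
  intro h
  rcases hpre with ⟨r, hr⟩ | rfl
  · obtain ⟨r', hr'⟩ := h
    rw [← hr'] at hr
    simp at hr
  · obtain ⟨r', hr'⟩ := h
    simp at hr'

lemma not_pref_tt {u : List Bool}
    (hpre : [true, false] <+: u ∨ u = [true]) :
    ¬ ([true, true] <+: u) := by
  intro h
  rcases hpre with ⟨r, hr⟩ | rfl
  · obtain ⟨r', hr'⟩ := h
    rw [← hr'] at hr
    simp at hr
  · obtain ⟨r', hr'⟩ := h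
    simp at hr'

lemma not_infix_ft (k : ℕ) : ¬ ([false, true] <:+: true :: List.replicate k false) := by
  rintro ⟨s, r, hsr⟩
  cases s with
  | nil => simp at hsr
  | cons c s' =>
    rw [List.cons_append, List.cons_append] at hsr
    injection hsr with _ h
    have : true ∈ List.replicate k false := by rw [← h]; simp
    simpa using List.eq_of_mem_replicate this

lemma not_infix_tt (k : ℕ) : ¬ ([true, true] <:+: true :: List.replicate k false) := by
  rintro ⟨s, r, hsr⟩
  cases s with
  | nil =>
    simp only [List.nil_append, List.cons_append] at hsr
    injection hsr with _ h
    have : true ∈ List.replicate k false := by rw [← h]; simp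
    simpa using List.eq_of_mem_replicate this
  | cons c s' =>
    rw [List.cons_append, List.cons_append] at hsr
    injection hsr with _ h
    have : true ∈ List.replicate k false := by rw [← h]; simp
    simpa using List.eq_of_mem_replicate this

lemma span_ttt (a : Bool) {u p₁ p₂ : List Bool}
    (hpre : [true, false] <+: u ∨ u = [true])
    (h1 : ([true, true, true] : List Bool) = p₁ ++ p₂)
    (h2 : p₁ <:+ psi a) (h3 : p₂ <+: u) : False := by
  have hmem : p₁ = [] ∨ p₁ = [true] ∨ p₁ = [true, true] ∨ p₁ = [true, true, true] := by
    have := (List.mem_inits p₁ [true, true, true]).mpr ⟨p₂, h1.symm⟩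
    simpa [List.inits] using this
  rcases hmem with rfl | rfl | rfl | rfl
  · simp only [List.nil_append] at h1
    exact not_pref_tt hpre ((by decide : [true,true] <+: [true,true,true]).trans (h1 ▸ h3))
  · have hp2 : p₂ = [true, true] := by simpa using h1.symm
    exact not_pref_tt hpre (hp2 ▸ h3)
  · revert h2; cases a <;> decide
  · revert h2; cases a <;> decide

lemma span_fft (a : Bool) {u p₁ p₂ : List Bool}
    (hpre : [true, false] <+: u ∨ u = [true])
    (h1 : ([false, false, true] : List Bool) = p₁ ++ p₂)
    (h2 : p₁ <:+ psi a) (h3 : p₂ <+: u) : False := by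
  have hmem : p₁ = [] ∨ p₁ = [false] ∨ p₁ = [false, false] ∨ p₁ = [false, false, true] := by
    have := (List.mem_inits p₁ [false, false, true]).mpr ⟨p₂, h1.symm⟩
    simpa [List.inits] using this
  rcases hmem with rfl | rfl | rfl | rfl
  · simp only [List.nil_append] at h1
    exact not_pref_f hpre [false, true] (h1 ▸ h3)
  · revert h2; cases a <;> decide
  · revert h2; cases a <;> decide
  · revert h2; cases a <;> decide

lemma span_slsls (a : Bool) {u p₁ p₂ : List Bool}
    (hpre : [true, false] <+: u ∨ u = [true])
    (h1 : ([false, true, false, true, false] : List Bool) = p₁ ++ p₂)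
    (h2 : p₁ <:+ psi a) (h3 : p₂ <+: u) : False := by
  have hmem : p₁ = [] ∨ p₁ = [false] ∨ p₁ = [false, true] ∨ p₁ = [false, true, false] ∨
      p₁ = [false, true, false, true] ∨ p₁ = [false, true, false, true, false] := by
    have := (List.mem_inits p₁ [false, true, false, true, false]).mpr ⟨p₂, h1.symm⟩
    simpa [List.inits] using this
  rcases hmem with rfl | rfl | rfl | rfl | rfl | rfl
  · simp only [List.nil_append] at h1
    exact not_pref_f hpre [true, false, true, false] (h1 ▸ h3)
  · revert h2; cases a <;> decide
  · have hp2 : p₂ = [false, true, false] := by simpa using h1.symm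
    exact not_pref_f hpre [true, false] (hp2 ▸ h3)
  · revert h2; cases a <;> decide
  · have hp2 : p₂ = [false] := by simpa using h1.symm
    exact not_pref_f hpre [] (hp2 ▸ h3)
  · revert h2; cases a <;> decide

lemma key (v : List Bool) (k : ℕ) :
    ¬ ([true, true, true] <:+: (v.flatMap psi ++ true :: List.replicate k false)) ∧
    ¬ ([false, false, true] <:+: (v.flatMap psi ++ true :: List.replicate k false)) ∧
    ¬ ([false, true, false, true, false] <:+: (v.flatMap psi ++ true :: List.replicate k false)) := by
  induction v with
  | nil =>
    refine ⟨fun h => ?_, fun h => ?_, fun h => ?_⟩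
    · exact not_infix_tt k ((by decide : [true,true] <:+: [true,true,true]).trans (by simpa using h))
    · exact not_infix_ft k ((by decide : [false,true] <:+: [false,false,true]).trans (by simpa using h))
    · exact not_infix_ft k ((by decide : [false,true] <:+: [false,true,false,true,false]).trans (by simpa using h))
  | cons a v ih =>
    have hpre := pref_fact v k
    obtain ⟨ih1, ih2, ih3⟩ := ih
    have hW : (a :: v).flatMap psi ++ true :: List.replicate k false =
        psi a ++ (v.flatMap psi ++ true :: List.replicate k false) := by
      simp
    rw [hW]
    refine ⟨fun h => ?_, fun h => ?_, fun h => ?_⟩ <;>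
      rcases infix_append_split h with h1 | h1 | ⟨p₁, p₂, h1, h2, h3⟩
    · revert h1; cases a <;> decide
    · exact ih1 h1
    · exact span_ttt a hpre h1 h2 h3
    · revert h1; cases a <;> decide
    · exact ih2 h1
    · exact span_fft a hpre h1 h2 h3
    · revert h1; cases a <;> decide
    · exact ih3 h1
    · exact span_slsls a hpre h1 h2 h3

/-- `LangL i` is the language 𝓛ᵢ : 𝓛₀ = L S*, 𝓛_{i+1} = ψ(𝓛_i) L S*. -/
def LangL : ℕ → Set (List Bool)
  | 0 => {w | ∃ k, w = true :: List.replicate k false}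
  | i + 1 => {w | ∃ v ∈ LangL i, ∃ k, w = v.flatMap psi ++ true :: List.replicate k false}

theorem stmt_16 (i : ℕ) (w : List Bool) (hw : w ∈ LangL i) :
    ¬ ([true, true, true] <:+: w) ∧
    ¬ ([false, false, true] <:+: w) ∧
    ¬ ([false, true, false, true, false] <:+: w) := by
  cases i with
  | zero =>
    obtain ⟨k, rfl⟩ := hw
    simpa using key [] k
  | succ i =>
    obtain ⟨v, _, k, rfl⟩ := hw
    exact key v k
end
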